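/- Let n ≥ 1 and k ≥ 1 be integers and let 0 < λ_1 ≤ λ_2 ≤ ⋯ ≤ λ_{k+1} be real numbers satisfying Yang's first inequality Σ_{i=1}^k (λ_{k+1} − λ_i)² ≤ (4/n) Σ_{i=1}^k (λ_{k+1} − λ_i) λ_i. Then Yang's second inequality holds: λ_{k+1} ≤ (1/k)(1 + 4/n) Σ_{i=1}^k λ_i. -/

import Mathlib

/-- Yang's first inequality implies Yang's second inequality. -/
theorem stmt18 (n k : ℕ) (hn : 1 ≤ n) (hk : 1 ≤ k) (lam : ℕ → ℝ)
    (hpos : 0 < lam 1)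
    (hmono : ∀ i, 1 ≤ i → i ≤ k → lam i ≤ lam (i + 1))
    (hyang : ∑ i ∈ Finset.Icc 1 k, (lam (k + 1) - lam i) ^ 2
      ≤ (4 / (n : ℝ)) * ∑ i ∈ Finset.Icc 1 k, (lam (k + 1) - lam i) * lam i) :
    lam (k + 1) ≤ (1 / (k : ℝ)) * (1 + 4 / (n : ℝ)) * ∑ i ∈ Finset.Icc 1 k, lam i := by
  set Λ := lam (k + 1) with hΛ
  set S := ∑ i ∈ Finset.Icc 1 k, lam i with hSdef
  set Q := ∑ i ∈ Finset.Icc 1 k, lam i ^ 2 with hQdef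
  have hn0 : (0:ℝ) < n := by exact_mod_cast hn
  have hk0 : (0:ℝ) < k := by exact_mod_cast hk
  have hcard : (Finset.Icc 1 k).card = k := by simp
  -- positivity of each lam i
  have hposi : ∀ i, 1 ≤ i → i ≤ k → 0 < lam i := by
    intro i hi hik
    induction i with
    | zero => omega
    | succ j ih =>
      rcases Nat.eq_or_lt_of_le hi with h | h
      · simpa [← h] using hpos
      · have hj1 : 1 ≤ j := by omega
        have hjk : j ≤ k := by omega
        exact lt_of_lt_of_le (ih hj1 hjk) (hmono j hj1 hjk)
  have hS : 0 < S := by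
    apply Finset.sum_pos
    · intro i hi
      simp only [Finset.mem_Icc] at hi
      exact hposi i hi.1 hi.2
    · exact ⟨1, by simp [hk]⟩
  have hCS : S ^ 2 ≤ (k:ℝ) * Q := by
    have := sq_sum_le_card_mul_sum_sq (s := Finset.Icc 1 k) (f := lam)
    rw [hcard] at this
    exact_mod_cast this
  have e1 : ∑ i ∈ Finset.Icc 1 k, (Λ - lam i) ^ 2 = (k:ℝ) * Λ ^ 2 - 2 * Λ * S + Q := by
    have : ∀ i ∈ Finset.Icc 1 k, (Λ - lam i) ^ 2 = Λ ^ 2 - 2 * Λ * lam i + lam i ^ 2 :=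
      fun i _ => by ring
    rw [Finset.sum_congr rfl this, Finset.sum_add_distrib, Finset.sum_sub_distrib,
      Finset.sum_const, hcard, ← Finset.mul_sum, nsmul_eq_mul]
  have e2 : ∑ i ∈ Finset.Icc 1 k, (Λ - lam i) * lam i = Λ * S - Q := by
    have : ∀ i ∈ Finset.Icc 1 k, (Λ - lam i) * lam i = Λ * lam i - lam i ^ 2 :=
      fun i _ => by ring
    rw [Finset.sum_congr rfl this, Finset.sum_sub_distrib, ← Finset.mul_sum]
  rw [e1, e2, div_mul_eq_mul_div, le_div_iff₀ hn0] at hyang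
  -- key inequality: n * k * Λ ≤ (n + 4) * S
  have key : (n:ℝ) * ((k:ℝ) * Λ) ≤ ((n:ℝ) + 4) * S := by
    rcases le_or_gt ((k:ℝ) * Λ) S with h | h
    · nlinarith
    · -- product (kΛ - S)(n k Λ - (n+4) S) ≤ 0
      have hprod : ((k:ℝ) * Λ - S) * ((n:ℝ) * ((k:ℝ) * Λ) - ((n:ℝ) + 4) * S) ≤ 0 := by
        nlinarith [mul_le_mul_of_nonneg_left hyang (le_of_lt hk0)]
      nlinarith
  rw [show (1 / (k:ℝ)) * (1 + 4 / (n:ℝ)) = ((n:ℝ) + 4) / ((n:ℝ) * k) by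
    rw [eq_div_iff (by positivity)]; field_simp, div_mul_eq_mul_div, le_div_iff₀ (by positivity)]
  nlinarith [key]
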